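/- In the Ramond case with ψ(L_2) = 0 and ψ(L_1) ≠ 0, the (1|1)-dimensional SVir_0⁺-module A(ψ) has the odd line ℂu as a nontrivial proper submodule. -/
import Mathlib


noncomputable section

/-- The action of `L_n` on the Ramond `A(ψ) = ℂw ⊕ ℂu` (`w = (1,0)` even, `u = (0,1)` odd). -/
def aL (ψL : ℤ → ℂ) (n : ℤ) : Module.End ℂ (ℂ × ℂ) := ψL n • (LinearMap.id)

/-- The action of `G_r` (`r ≥ 1`) on the Ramond `A(ψ)`: `G_1·w = u`, `G_1·u = ψ(L_2)w`,
and for `r ≥ 2`: `G_r·w = 0`, `G_r·u = 2ψ(L_{r+1})w`. -/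
def bG (ψL : ℤ → ℂ) (r : ℤ) : Module.End ℂ (ℂ × ℂ) :=
  LinearMap.prod
    ((if r = 1 then ψL 2 else 2 * ψL (r + 1)) • LinearMap.snd ℂ ℂ ℂ)
    ((if r = 1 then (1 : ℂ) else 0) • LinearMap.fst ℂ ℂ ℂ)

/-- The odd line `ℂu`. -/
def oddLine : Submodule ℂ (ℂ × ℂ) := Submodule.prod ⊥ ⊤

/-- In the Ramond case, if `ψ(L_2) = 0` and `ψ(L_1) ≠ 0`, the
`(1|1)`-dimensional `SVir_0⁺`-module `A(ψ)` has the odd line `ℂu` as a nontrivial proper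
submodule: `ℂu` is invariant under all `L_n` (`n ≥ 1`) and `G_r` (`r ≥ 1`), and is neither
`0` nor the whole module. -/
theorem whittaker_stmt9 (ψL ψG : ℤ → ℂ)
    (hLL : ∀ m n : ℤ, 1 ≤ m → 1 ≤ n → ((m : ℂ) - (n : ℂ)) * ψL (m + n) = 0)
    (hLG : ∀ m r : ℤ, 1 ≤ m → 2 ≤ r → ((m : ℂ)/2 - (r : ℂ)) * ψG (m + r) = 0)
    (hGG : ∀ r s : ℤ, 2 ≤ r → 2 ≤ s → (2 : ℂ) * ψL (r + s) = 0)
    (hparity : ∀ r : ℤ, 2 ≤ r → ψG r = 0)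
    (h2 : ψL 2 = 0) (h1 : ψL 1 ≠ 0) :
    (∀ n : ℤ, 1 ≤ n → ∀ v ∈ oddLine, aL ψL n v ∈ oddLine) ∧
    (∀ r : ℤ, 1 ≤ r → ∀ v ∈ oddLine, bG ψL r v ∈ oddLine) ∧
    oddLine ≠ ⊥ ∧ oddLine ≠ ⊤ := by
  refine ⟨?_, ?_, ?_, ?_⟩
  · intro n hn v hv
    rw [oddLine, Submodule.mem_prod] at hv ⊢
    obtain ⟨hv1, -⟩ := hv
    simp only [Submodule.mem_bot] at hv1
    refine ⟨?_, trivial⟩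
    simp [aL, hv1, Submodule.mem_bot]
  · intro r hr v hv
    rw [oddLine, Submodule.mem_prod] at hv ⊢
    obtain ⟨hv1, -⟩ := hv
    simp only [Submodule.mem_bot] at hv1
    refine ⟨?_, trivial⟩
    simp only [bG, Submodule.mem_bot, LinearMap.prod_apply, Pi.prod, LinearMap.smul_apply,
      LinearMap.snd_apply, smul_eq_mul]
    rcases eq_or_lt_of_le hr with h | h
    · simp [← h, h2]
    · have hr2 : 2 ≤ r := h
      have : ψL (r + 1) = 0 := by
        have := hLL r 1 (by linarith) le_rfl
        have hne : ((r : ℂ) - 1) ≠ 0 := by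
          intro hc
          have : (r : ℂ) = 1 := by linear_combination hc
          have : r = 1 := by exact_mod_cast this
          omega
        push_cast at this
        rcases mul_eq_zero.mp this with h' | h'
        · exact absurd h' hne
        · exact h'
      have hr1 : r ≠ 1 := by omega
      simp [hr1, this]
  · intro h
    have : ((0 : ℂ), (1 : ℂ)) ∈ oddLine := by
      rw [oddLine, Submodule.mem_prod]; exact ⟨by simp, trivial⟩
    rw [h] at this
    simp at this
  · intro h
    have : ((1 : ℂ), (0 : ℂ)) ∈ oddLine := h ▸ trivial
    rw [oddLine, Submodule.mem_prod] at this
    obtain ⟨h1', -⟩ := this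
    simp at h1'
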